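/- Let A be a real n × n matrix and T ∈ ℝ. Then: (i) for all sufficiently large M ∈ ℕ, the matrix I − (T/M)·A is invertible; and (ii) the sequence of matrices ((I − (T/M)·A)⁻¹)^M converges, as M → ∞, to the matrix exponential exp(T·A). -/

import Mathlib

open Filter NormedSpace

private lemma aux_pow_sub_pow {𝔸 : Type*} [NormedRing 𝔸] {a b : 𝔸} {K : ℝ}
    (ha : ‖a‖ ≤ K) (hb : ‖b‖ ≤ K) (hK : 0 ≤ K) :
    ∀ m : ℕ, ‖a ^ (m + 1) - b ^ (m + 1)‖ ≤ (m + 1) * K ^ m * ‖a - b‖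
  | 0 => by simp
  | (m + 1) => by
    have ih := aux_pow_sub_pow ha hb hK m
    have h1 : a ^ (m + 2) - b ^ (m + 2)
        = a ^ (m + 1) * (a - b) + (a ^ (m + 1) - b ^ (m + 1)) * b := by
      rw [pow_succ, pow_succ]; noncomm_ring
    have h2 : ‖a ^ (m + 1)‖ ≤ K ^ (m + 1) :=
      (norm_pow_le' a (Nat.succ_pos m)).trans (pow_le_pow_left₀ (norm_nonneg a) ha _)
    have h3 : ‖a ^ (m + 2) - b ^ (m + 2)‖
        ≤ ‖a ^ (m + 1)‖ * ‖a - b‖ + ‖a ^ (m + 1) - b ^ (m + 1)‖ * ‖b‖ := by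
      rw [h1]
      exact (norm_add_le _ _).trans (add_le_add (norm_mul_le _ _) (norm_mul_le _ _))
    have h4 : ‖a ^ (m + 1) - b ^ (m + 1)‖ * ‖b‖ ≤ ((m : ℝ) + 1) * K ^ m * ‖a - b‖ * K := by
      have := mul_le_mul ih hb (norm_nonneg b)
        (by positivity)
      simpa using this
    have h5 : ‖a ^ (m + 1)‖ * ‖a - b‖ ≤ K ^ (m + 1) * ‖a - b‖ :=
      mul_le_mul_of_nonneg_right h2 (norm_nonneg _)
    have hps : K ^ m * K = K ^ (m + 1) := (pow_succ K m).symm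
    calc ‖a ^ (m + 2) - b ^ (m + 2)‖
        ≤ K ^ (m + 1) * ‖a - b‖ + ((m : ℝ) + 1) * K ^ m * ‖a - b‖ * K := by
          exact h3.trans (add_le_add h5 h4)
      _ = ((m : ℝ) + 1 + 1) * K ^ (m + 1) * ‖a - b‖ := by rw [← hps]; ring
      _ = ((m + 1 : ℕ) + 1) * K ^ (m + 1) * ‖a - b‖ := by push_cast; ring

private lemma aux_exp_sub_le {𝔸 : Type*} [NormedRing 𝔸] [NormedAlgebra ℝ 𝔸] [CompleteSpace 𝔸]
    {y : 𝔸} (h : ‖y‖ ≤ 1 / 2) : ‖exp y - (1 + y)‖ ≤ 2 * ‖y‖ ^ 2 := by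
  have hy1 : ‖y‖ < 1 := lt_of_le_of_lt h (by norm_num)
  have hs : Summable fun n : ℕ => ((n.factorial : ℝ))⁻¹ • y ^ n :=
    NormedSpace.expSeries_summable' (𝕂 := ℝ) y
  have hsum := Summable.sum_add_tsum_nat_add (f := fun n : ℕ => ((n.factorial : ℝ))⁻¹ • y ^ n) 2 hs
  have h0 : ∑ i ∈ Finset.range 2, ((i.factorial : ℝ))⁻¹ • y ^ i = 1 + y := by
    simp [Finset.sum_range_succ]
  have hexp : exp y - (1 + y) = ∑' i : ℕ, (((i + 2).factorial : ℝ))⁻¹ • y ^ (i + 2) := by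
    have he : exp y = ∑' n : ℕ, ((n.factorial : ℝ))⁻¹ • y ^ n :=
      congrFun (NormedSpace.exp_eq_tsum (𝕂 := ℝ)) y
    beta_reduce at hsum
    rw [he, ← hsum, h0]; abel
  rw [hexp]
  have hgeo : HasSum (fun i : ℕ => ‖y‖ ^ 2 * ‖y‖ ^ i) (‖y‖ ^ 2 * (1 - ‖y‖)⁻¹) :=
    (hasSum_geometric_of_lt_one (norm_nonneg y) hy1).mul_left _
  have hbound : ∀ i : ℕ, ‖(((i + 2).factorial : ℝ))⁻¹ • y ^ (i + 2)‖ ≤ ‖y‖ ^ 2 * ‖y‖ ^ i := by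
    intro i
    rw [norm_smul]
    have h1 : ‖(((i + 2).factorial : ℝ))⁻¹‖ ≤ 1 := by
      rw [Real.norm_eq_abs, abs_of_nonneg (by positivity)]
      rw [inv_le_one_iff₀]
      right
      exact_mod_cast Nat.one_le_iff_ne_zero.mpr (Nat.factorial_ne_zero _)
    have h2 : ‖y ^ (i + 2)‖ ≤ ‖y‖ ^ 2 * ‖y‖ ^ i := by
      have := norm_pow_le' y (Nat.succ_pos (i + 1))
      calc ‖y ^ (i + 2)‖ ≤ ‖y‖ ^ (i + 2) := this
        _ = ‖y‖ ^ 2 * ‖y‖ ^ i := by rw [← pow_add]; ring_nf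
    calc ‖(((i + 2).factorial : ℝ))⁻¹‖ * ‖y ^ (i + 2)‖ ≤ 1 * (‖y‖ ^ 2 * ‖y‖ ^ i) :=
      mul_le_mul h1 h2 (norm_nonneg _) one_pos.le
      _ = ‖y‖ ^ 2 * ‖y‖ ^ i := one_mul _
  have := tsum_of_norm_bounded hgeo hbound
  refine this.trans ?_
  have hinv : (1 - ‖y‖)⁻¹ ≤ 2 := by
    rw [inv_le_comm₀ (by linarith) (by norm_num)]
    linarith
  nlinarith [sq_nonneg ‖y‖]

/-- Key abstract lemma: resolvent representation of `exp` in a Banach algebra. -/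
private lemma aux_resolvent_tendsto {𝔸 : Type*} [NormedRing 𝔸] [NormOneClass 𝔸]
    [NormedAlgebra ℝ 𝔸] [CompleteSpace 𝔸] (x : 𝔸) :
    Tendsto (fun M : ℕ => (Ring.inverse (1 - ((M : ℝ))⁻¹ • x)) ^ M) atTop
      (nhds (exp x)) := by
  set r := ‖x‖ with hr
  have hr0 : 0 ≤ r := norm_nonneg x
  rw [tendsto_iff_norm_sub_tendsto_zero]
  apply squeeze_zero' (g := fun M : ℕ => 4 * r ^ 2 * Real.exp (2 * r) / M)
    (Eventually.of_forall fun M => norm_nonneg _)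
  swap
  · exact tendsto_const_div_atTop_nhds_zero_nat _
  have hM₀ : ∀ᶠ M : ℕ in atTop, (2 * r ≤ (M : ℝ) ∧ 1 ≤ M) := by
    filter_upwards [eventually_ge_atTop (⌈2 * r⌉₊ + 1)] with M hM
    constructor
    · calc 2 * r ≤ (⌈2 * r⌉₊ : ℝ) := Nat.le_ceil _
        _ ≤ M := by exact_mod_cast le_trans (Nat.le_succ _) hM
    · omega
  filter_upwards [hM₀] with M hM
  obtain ⟨hM2r, hM1⟩ := hM
  have hMpos : (0 : ℝ) < M := by exact_mod_cast hM1
  set y := ((M : ℝ))⁻¹ • x with hy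
  have hynorm : ‖y‖ = r / M := by
    rw [hy, norm_smul, norm_inv, Real.norm_natCast]; ring
  have hyhalf : ‖y‖ ≤ 1 / 2 := by
    rw [hynorm, div_le_div_iff₀ hMpos (by norm_num)]
    linarith
  have hy1 : ‖y‖ < 1 := lt_of_le_of_lt hyhalf (by norm_num)
  have hu : IsUnit (1 - y) := (Units.oneSub y hy1).isUnit
  set B := Ring.inverse (1 - y) with hB
  have hB1 : (1 - y) * B = 1 := Ring.mul_inverse_cancel _ hu
  have hBeq : B = 1 + y * B := by
    calc B = (1 - y) * B + y * B := by noncomm_ring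
      _ = 1 + y * B := by rw [hB1]
  have hBnorm2 : ‖B‖ ≤ 2 := by
    have h1 : ‖B‖ ≤ 1 + ‖y‖ * ‖B‖ := by
      calc ‖B‖ = ‖1 + y * B‖ := by rw [← hBeq]
        _ ≤ ‖(1 : 𝔸)‖ + ‖y * B‖ := norm_add_le _ _
        _ ≤ 1 + ‖y‖ * ‖B‖ := by rw [norm_one]; exact add_le_add_right (norm_mul_le _ _) 1
    nlinarith [norm_nonneg B, mul_le_mul_of_nonneg_right hyhalf (norm_nonneg B)]
  have hBnorm : ‖B‖ ≤ 1 + 2 * ‖y‖ := by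
    have h1 : ‖B‖ ≤ 1 + ‖y‖ * ‖B‖ := by
      calc ‖B‖ = ‖1 + y * B‖ := by rw [← hBeq]
        _ ≤ ‖(1 : 𝔸)‖ + ‖y * B‖ := norm_add_le _ _
        _ ≤ 1 + ‖y‖ * ‖B‖ := by rw [norm_one]; exact add_le_add_right (norm_mul_le _ _) 1
    nlinarith [norm_nonneg B, norm_nonneg y, mul_le_mul_of_nonneg_left hBnorm2 (norm_nonneg y)]
  have hBsub : ‖B - (1 + y)‖ ≤ 2 * ‖y‖ ^ 2 := by
    have h2 : B = 1 + y + y * (y * B) := by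
      calc B = 1 + y * B := hBeq
        _ = 1 + y * (1 + y * B) := by rw [← hBeq]; exact hBeq
        _ = 1 + y + y * (y * B) := by noncomm_ring
    have h3 : B - (1 + y) = y * (y * B) := by
      conv_lhs => rw [h2]
      noncomm_ring
    rw [h3]
    calc ‖y * (y * B)‖ ≤ ‖y‖ * ‖y * B‖ := norm_mul_le _ _
      _ ≤ ‖y‖ * (‖y‖ * ‖B‖) := by
          exact mul_le_mul_of_nonneg_left (norm_mul_le _ _) (norm_nonneg y)
      _ ≤ 2 * ‖y‖ ^ 2 := by nlinarith [norm_nonneg y, norm_nonneg B]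
  -- exp side
  set D := exp y with hD
  have hDsub : ‖D - (1 + y)‖ ≤ 2 * ‖y‖ ^ 2 := aux_exp_sub_le hyhalf
  have hDnorm : ‖D‖ ≤ 1 + 2 * ‖y‖ := by
    have := norm_sub_norm_le D (1 + y)
    have h1 : ‖(1 : 𝔸) + y‖ ≤ 1 + ‖y‖ := by
      calc ‖(1 : 𝔸) + y‖ ≤ ‖(1 : 𝔸)‖ + ‖y‖ := norm_add_le _ _
        _ = 1 + ‖y‖ := by rw [norm_one]
    nlinarith [norm_nonneg y]
  -- exp x = D ^ M
  have hxy : exp x = D ^ M := by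
    have h1 : x = (M : ℕ) • y := by
      rw [← Nat.cast_smul_eq_nsmul ℝ M y, hy, smul_smul]
      rw [mul_inv_cancel₀ (ne_of_gt hMpos), one_smul]
    letI : NormedAlgebra ℚ 𝔸 := NormedAlgebra.restrictScalars ℚ ℝ 𝔸
    rw [hD, ← NormedSpace.exp_nsmul, ← h1]
  -- combine
  have hBD : ‖B - D‖ ≤ 4 * ‖y‖ ^ 2 := by
    have : B - D = (B - (1 + y)) - (D - (1 + y)) := by abel
    rw [this]
    calc ‖(B - (1 + y)) - (D - (1 + y))‖ ≤ ‖B - (1 + y)‖ + ‖D - (1 + y)‖ := norm_sub_le _ _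
      _ ≤ 4 * ‖y‖ ^ 2 := by linarith
  set K := 1 + 2 * ‖y‖ with hK
  have hK0 : (0 : ℝ) ≤ K := by positivity
  obtain ⟨m, rfl⟩ : ∃ m : ℕ, M = m + 1 := ⟨M - 1, (Nat.succ_pred_eq_of_pos hM1).symm⟩
  have hmain := aux_pow_sub_pow hBnorm hDnorm hK0 m
  rw [hxy]
  refine hmain.trans ?_
  have hKexp : K ^ m ≤ Real.exp (2 * r) := by
    have h1 : K ≤ Real.exp (2 * ‖y‖) := by
      have := Real.add_one_le_exp (2 * ‖y‖)
      linarith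
    have h2 : K ^ m ≤ Real.exp (2 * ‖y‖) ^ m :=
      pow_le_pow_left₀ hK0 h1 m
    have h3 : Real.exp (2 * ‖y‖) ^ m ≤ Real.exp (2 * ‖y‖) ^ (m + 1) := by
      apply pow_le_pow_right₀ (Real.one_le_exp (by positivity))
      omega
    have h4 : Real.exp (2 * ‖y‖) ^ (m + 1) = Real.exp ((m + 1 : ℕ) * (2 * ‖y‖)) := by
      rw [Real.exp_nat_mul]
    have h5 : ((m + 1 : ℕ) : ℝ) * (2 * ‖y‖) ≤ 2 * r := by
      rw [hynorm]
      have hne : ((m + 1 : ℕ) : ℝ) ≠ 0 := ne_of_gt hMpos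
      field_simp
      exact le_rfl
    calc K ^ m ≤ Real.exp (2 * ‖y‖) ^ (m + 1) := h2.trans h3
      _ = Real.exp ((m + 1 : ℕ) * (2 * ‖y‖)) := h4
      _ ≤ Real.exp (2 * r) := Real.exp_le_exp.mpr h5
  have hBD2 : ‖B - D‖ ≤ 4 * r ^ 2 / ((m + 1 : ℕ) : ℝ) ^ 2 := by
    rw [hynorm] at hBD
    calc ‖B - D‖ ≤ 4 * (r / ((m + 1 : ℕ) : ℝ)) ^ 2 := hBD
      _ = 4 * r ^ 2 / ((m + 1 : ℕ) : ℝ) ^ 2 := by rw [div_pow]; ring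
  push_cast at hBD2 hMpos ⊢
  calc ((m : ℝ) + 1) * K ^ m * ‖B - D‖
      ≤ ((m : ℝ) + 1) * Real.exp (2 * r) * (4 * r ^ 2 / ((m : ℝ) + 1) ^ 2) := by
        gcongr
    _ = 4 * r ^ 2 * Real.exp (2 * r) / ((m : ℝ) + 1) := by
        field_simp

private lemma aux_matrix_case {n : ℕ} (A : Matrix (Fin (n + 1)) (Fin (n + 1)) ℝ) (T : ℝ) :
    (∃ M₀ : ℕ, ∀ M : ℕ, M₀ ≤ M → IsUnit (1 - (T / M) • A)) ∧
    Filter.Tendsto (fun M : ℕ => ((1 - (T / M) • A)⁻¹) ^ M) Filter.atTop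
      (nhds (NormedSpace.exp (T • A))) := by
  letI : SeminormedRing (Matrix (Fin (n + 1)) (Fin (n + 1)) ℝ) := Matrix.linftyOpSemiNormedRing
  letI : NormedRing (Matrix (Fin (n + 1)) (Fin (n + 1)) ℝ) := Matrix.linftyOpNormedRing
  letI : NormedAlgebra ℝ (Matrix (Fin (n + 1)) (Fin (n + 1)) ℝ) := Matrix.linftyOpNormedAlgebra
  constructor
  · refine ⟨⌈2 * (|T| * ‖A‖)⌉₊ + 1, fun M hM => ?_⟩
    have hM1 : 1 ≤ M := le_trans (Nat.le_add_left 1 _) hM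
    have hMpos : (0 : ℝ) < M := by exact_mod_cast hM1
    have h2c : 2 * (|T| * ‖A‖) ≤ M := by
      calc 2 * (|T| * ‖A‖) ≤ (⌈2 * (|T| * ‖A‖)⌉₊ : ℝ) := Nat.le_ceil _
        _ ≤ M := by exact_mod_cast le_trans (Nat.le_succ _) hM
    have hnorm : ‖(T / M) • A‖ < 1 := by
      rw [norm_smul, Real.norm_eq_abs, abs_div, Nat.abs_cast M]
      rw [div_mul_eq_mul_div, div_lt_one hMpos]
      nlinarith [abs_nonneg T, norm_nonneg A]
    exact ⟨Units.oneSub _ hnorm, rfl⟩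
  · refine (aux_resolvent_tendsto (T • A)).congr fun M => ?_
    have h1 : ((M : ℝ))⁻¹ • (T • A) = (T / M) • A := by
      rw [smul_smul, div_eq_mul_inv, mul_comm]
    rw [h1, ← Matrix.nonsing_inv_eq_ringInverse]

theorem resolvent_exp_limit {n : ℕ} (A : Matrix (Fin n) (Fin n) ℝ) (T : ℝ) :
    (∃ M₀ : ℕ, ∀ M : ℕ, M₀ ≤ M → IsUnit (1 - (T / M) • A)) ∧
    Filter.Tendsto (fun M : ℕ => ((1 - (T / M) • A)⁻¹) ^ M) Filter.atTop
      (nhds (NormedSpace.exp (T • A))) := by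
  cases n with
  | zero =>
    haveI : Subsingleton (Matrix (Fin 0) (Fin 0) ℝ) :=
      ⟨fun a b => by ext i j; exact i.elim0⟩
    constructor
    · exact ⟨0, fun M _ => isUnit_of_subsingleton _⟩
    · exact tendsto_const_nhds.congr fun M => Subsingleton.elim _ _
  | succ n => exact aux_matrix_case A T
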